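/- Let g ≥ 2 be an integer, let l > 0 be a real number, and let s be a real number. The family γ ↦ exp(-s · l · |γ|) over all elements γ of the free group on g generators is summable if and only if s > log(2g-1)/l. (In particular, the Poincaré series of the free group acting on its Cayley tree with edge length l has critical exponent log(2g-1)/l and diverges at the critical exponent, i.e., the free group is a divergence group.) -/

import Mathlib

open Real

namespace FGPoincareAux

/-- The relation on letters expressing that two consecutive letters are not inverse to
each other. -/
def Rel {α : Type*} (a b : α × Bool) : Prop := ¬(a.1 = b.1 ∧ a.2 = !b.2)

variable {α : Type*} [DecidableEq α]

lemma chain'_reduce (L : List (α × Bool)) : List.Chain' Rel (FreeGroup.reduce L) := by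
  induction L with
  | nil => exact List.isChain_nil
  | cons x L ih =>
    rw [FreeGroup.reduce.cons]
    cases h : FreeGroup.reduce L with
    | nil => exact List.isChain_singleton _
    | cons hd tl =>
      rw [h] at ih
      show List.Chain' Rel (if x.1 = hd.1 ∧ x.2 = !hd.2 then tl else x :: hd :: tl)
      by_cases hc : x.1 = hd.1 ∧ x.2 = !hd.2
      · rw [if_pos hc]; exact ih.tail
      · rw [if_neg hc]; exact List.isChain_cons_cons.2 ⟨hc, ih⟩

lemma reduce_eq_self {L : List (α × Bool)} (h : List.Chain' Rel L) :
    FreeGroup.reduce L = L := by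
  induction L with
  | nil => rfl
  | cons x L ih =>
    rw [FreeGroup.reduce.cons, ih h.tail]
    cases L with
    | nil => rfl
    | cons hd tl =>
      have := (List.isChain_cons_cons.1 h).1
      simp only [Rel] at this
      show (if x.1 = hd.1 ∧ x.2 = !hd.2 then tl else x :: hd :: tl) = x :: hd :: tl
      rw [if_neg this]

variable {g : ℕ}

/-- An equivalence between letters different from the inverse of `x` and `Fin (2*g-1)`. -/
noncomputable def codeEquiv (hg : 1 ≤ g) (x : Fin g × Bool) :
    {y : Fin g × Bool // y ≠ (x.1, !x.2)} ≃ Fin (2 * g - 1) :=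
  Fintype.equivFinOfCardEq (by
    have h2 := Fintype.card_subtype_compl (fun y : Fin g × Bool => y = (x.1, !x.2))
    have h1 : Fintype.card {y : Fin g × Bool // y = (x.1, !x.2)} = 1 :=
      Fintype.card_subtype_eq _
    have h3 : Fintype.card (Fin g × Bool) = 2 * g := by simp [Fintype.card_prod]; ring
    have : Fintype.card {y : Fin g × Bool // ¬ y = (x.1, !x.2)} = 2 * g - 1 := by
      rw [h2, h1, h3]
    exact this)

noncomputable def D (hg : 1 ≤ g) (x : Fin g × Bool) (k : Fin (2 * g - 1)) : Fin g × Bool :=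
  ((codeEquiv hg x).symm k).val

lemma D_ne (hg : 1 ≤ g) (x : Fin g × Bool) (k : Fin (2 * g - 1)) :
    D hg x k ≠ (x.1, !x.2) := ((codeEquiv hg x).symm k).2

lemma D_inj (hg : 1 ≤ g) (x : Fin g × Bool) {k k' : Fin (2 * g - 1)}
    (h : D hg x k = D hg x k') : k = k' :=
  (codeEquiv hg x).symm.injective (Subtype.ext h)

lemma D_code (hg : 1 ≤ g) (x y : Fin g × Bool) (h : y ≠ (x.1, !x.2)) :
    D hg x (codeEquiv hg x ⟨y, h⟩) = y := by
  simp [D]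

lemma rel_D (hg : 1 ≤ g) (x : Fin g × Bool) (k : Fin (2 * g - 1)) :
    Rel x (D hg x k) := by
  rintro ⟨h1, h2⟩
  exact D_ne hg x k (Prod.ext h1.symm (by rw [h2, Bool.not_not]))

noncomputable def go (hg : 1 ≤ g) : Fin g × Bool → List (Fin (2 * g - 1)) → List (Fin g × Bool)
  | _, [] => []
  | x, k :: ks => D hg x k :: go hg (D hg x k) ks

lemma length_go (hg : 1 ≤ g) (x : Fin g × Bool) (ks : List (Fin (2 * g - 1))) :
    (go hg x ks).length = ks.length := by
  induction ks generalizing x with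
  | nil => rfl
  | cons k ks ih => simp [go, ih]

lemma chain'_go (hg : 1 ≤ g) (x : Fin g × Bool) (ks : List (Fin (2 * g - 1))) :
    List.Chain' Rel (x :: go hg x ks) := by
  induction ks generalizing x with
  | nil => exact List.isChain_singleton _
  | cons k ks ih =>
    exact List.isChain_cons_cons.2 ⟨rel_D hg x k, ih (D hg x k)⟩

lemma go_inj (hg : 1 ≤ g) (x : Fin g × Bool) {ks ks' : List (Fin (2 * g - 1))}
    (h : go hg x ks = go hg x ks') : ks = ks' := by
  induction ks generalizing x ks' with
  | nil => cases ks' with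
    | nil => rfl
    | cons k ks' => simp [go] at h
  | cons k ks ih =>
    cases ks' with
    | nil => simp [go] at h
    | cons k' ks' =>
      simp only [go, List.cons.injEq] at h
      obtain ⟨h1, h2⟩ := h
      obtain rfl := D_inj hg x h1
      rw [ih (D hg x k) h2]

lemma go_surj (hg : 1 ≤ g) (L : List (Fin g × Bool)) :
    ∀ x : Fin g × Bool, List.Chain' Rel (x :: L) → ∃ ks, go hg x ks = L := by
  induction L with
  | nil => exact fun x _ => ⟨[], rfl⟩
  | cons y L ih =>
    intro x h
    have h1 : Rel x y := (List.isChain_cons_cons.1 h).1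
    have h2 : List.Chain' Rel (y :: L) := (List.isChain_cons_cons.1 h).2
    have hy : y ≠ (x.1, !x.2) := by
      rintro rfl
      exact h1 ⟨rfl, by simp⟩
    obtain ⟨ks, hks⟩ := ih y h2
    refine ⟨codeEquiv hg x ⟨y, hy⟩ :: ks, ?_⟩
    simp only [go, D_code hg x y hy, hks]

noncomputable def dec (hg : 1 ≤ g) (p : (Fin g × Bool) × List (Fin (2 * g - 1))) :
    {γ : FreeGroup (Fin g) // γ ≠ 1} :=
  ⟨FreeGroup.mk (p.1 :: go hg p.1 p.2), by
    rw [Ne, ← FreeGroup.toWord_eq_nil_iff, FreeGroup.toWord_mk,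
      reduce_eq_self (chain'_go hg p.1 p.2)]
    simp⟩

lemma norm_dec (hg : 1 ≤ g) (p : (Fin g × Bool) × List (Fin (2 * g - 1))) :
    (dec hg p).1.norm = p.2.length + 1 := by
  show (FreeGroup.mk (p.1 :: go hg p.1 p.2)).toWord.length = _
  rw [FreeGroup.toWord_mk, reduce_eq_self (chain'_go hg p.1 p.2)]
  simp [length_go]

lemma dec_bijective (hg : 1 ≤ g) : Function.Bijective (dec (g := g) hg) := by
  constructor
  · rintro ⟨x, ks⟩ ⟨x', ks'⟩ h
    have h' : FreeGroup.mk (x :: go hg x ks) = FreeGroup.mk (x' :: go hg x' ks') :=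
      congrArg Subtype.val h
    have h'' := FreeGroup.reduce.sound h'
    rw [reduce_eq_self (chain'_go hg x ks), reduce_eq_self (chain'_go hg x' ks')] at h''
    obtain ⟨rfl, htl⟩ := List.cons.injEq .. ▸ h''
    · obtain rfl := go_inj hg x htl
      rfl
  · rintro ⟨γ, hγ⟩
    have hch : List.Chain' Rel γ.toWord := by
      rw [← FreeGroup.reduce_toWord]; exact chain'_reduce _
    have hne : γ.toWord ≠ [] := by rwa [Ne, FreeGroup.toWord_eq_nil_iff]
    cases hw : γ.toWord with
    | nil => exact absurd hw hne
    | cons x L =>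
      rw [hw] at hch
      obtain ⟨ks, hks⟩ := go_surj hg L x hch
      refine ⟨(x, ks), Subtype.ext ?_⟩
      show FreeGroup.mk (x :: go hg x ks) = γ
      rw [hks, ← hw, FreeGroup.mk_toWord]

lemma summable_list_geometric (m : ℕ) {r : ℝ} (hr : 0 < r) :
    Summable (fun L : List (Fin m) => r ^ L.length) ↔ (m : ℝ) * r < 1 := by
  have he : ((fun L : List (Fin m) => r ^ L.length) ∘
      (List.equivSigmaTuple (α := Fin m)).symm) = fun p : Σ n, Fin n → Fin m => r ^ p.1 := by
    funext p
    simp [List.equivSigmaTuple]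
  rw [← (List.equivSigmaTuple (α := Fin m)).symm.summable_iff, he,
    summable_sigma_of_nonneg (fun _ => pow_nonneg hr.le _)]
  have hkey : (fun n : ℕ => ∑' _f : Fin n → Fin m, r ^ n) = fun n : ℕ => ((m : ℝ) * r) ^ n := by
    funext n
    rw [tsum_fintype]
    simp [Finset.sum_const, Fintype.card_fun, mul_pow]
  rw [hkey, and_iff_right (fun n => Summable.of_finite), summable_geometric_iff_norm_lt_one,
    Real.norm_eq_abs, abs_of_nonneg (by positivity)]

end FGPoincareAux

open FGPoincareAux in
/-- The Poincaré series of the free group of rank `g ≥ 2` acting on its Cayley tree with edge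
length `l > 0`: the family `γ ↦ exp(-s·l·|γ|)` over the free group is summable iff
`s > log(2g-1)/l`; in particular the critical exponent is `log(2g-1)/l` and the series diverges
at the critical exponent (the free group is a divergence group). -/
theorem freeGroup_poincare_series_summable_iff (g : ℕ) (hg : 2 ≤ g) (l : ℝ) (hl : 0 < l)
    (s : ℝ) :
    Summable (fun γ : FreeGroup (Fin g) => Real.exp (-(s * l * (γ.norm : ℝ)))) ↔
      Real.log (2 * (g : ℝ) - 1) / l < s := by
  have hg1 : 1 ≤ g := by omega
  set a : ℝ := Real.exp (-(s * l)) with ha_def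
  have ha : 0 < a := Real.exp_pos _
  have hfa : (fun γ : FreeGroup (Fin g) => Real.exp (-(s * l * (γ.norm : ℝ))))
      = fun γ : FreeGroup (Fin g) => a ^ γ.norm := by
    funext γ
    rw [ha_def, ← Real.exp_nat_mul]
    congr 1
    ring
  rw [hfa]
  -- Step 1: restrict to the complement of the identity
  have h1 : Summable (fun γ : FreeGroup (Fin g) => a ^ γ.norm) ↔
      Summable (fun γ : {γ : FreeGroup (Fin g) // γ ≠ 1} => a ^ (γ.1.norm)) := by
    constructor
    · intro h
      exact h.comp_injective Subtype.val_injective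
    · intro h
      have hfin : ({γ : FreeGroup (Fin g) | γ ≠ 1}ᶜ : Set (FreeGroup (Fin g))).Finite := by
        apply Set.Finite.subset (Set.finite_singleton 1)
        intro γ hγ
        simp only [Set.mem_compl_iff, Set.mem_setOf_eq, not_not] at hγ
        simp [hγ]
      haveI := hfin.to_subtype
      exact (summable_subtype_and_compl
        (s := {γ : FreeGroup (Fin g) | γ ≠ 1})).1 ⟨h, Summable.of_finite⟩
  -- Step 2: transport along the bijection with codes
  have h2 : Summable (fun γ : {γ : FreeGroup (Fin g) // γ ≠ 1} => a ^ (γ.1.norm)) ↔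
      Summable (fun p : (Fin g × Bool) × List (Fin (2 * g - 1)) => a ^ (p.2.length + 1)) := by
    rw [← (Equiv.ofBijective _ (dec_bijective hg1)).summable_iff]
    apply summable_congr
    intro p
    show a ^ ((dec hg1 p).1.norm) = _
    rw [norm_dec hg1 p]
  -- Step 3: remove the product with the finite letter set
  have hpow : ∀ m : ℕ, Summable (fun ks : List (Fin m) => a ^ (ks.length + 1)) ↔
      Summable (fun ks : List (Fin m) => a ^ ks.length) := by
    intro m
    have : (fun ks : List (Fin m) => a ^ (ks.length + 1))
        = fun ks : List (Fin m) => a * a ^ ks.length := by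
      funext ks; ring
    rw [this, summable_mul_left_iff ha.ne']
  have h3 : Summable (fun p : (Fin g × Bool) × List (Fin (2 * g - 1)) => a ^ (p.2.length + 1)) ↔
      Summable (fun ks : List (Fin (2 * g - 1)) => a ^ ks.length) := by
    rw [summable_prod_of_nonneg (fun p => pow_nonneg ha.le _)]
    constructor
    · rintro ⟨h, -⟩
      exact (hpow _).1 (h (⟨0, by omega⟩, true))
    · intro h
      exact ⟨fun _ => (hpow _).2 h, Summable.of_finite⟩
  rw [h1, h2, h3, summable_list_geometric _ ha]
  -- Final arithmetic
  have hcast : ((2 * g - 1 : ℕ) : ℝ) = 2 * (g : ℝ) - 1 := by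
    have : 1 ≤ 2 * g := by omega
    push_cast [Nat.cast_sub this]
    ring
  have hc : (0 : ℝ) < 2 * (g : ℝ) - 1 := by
    have : (2 : ℝ) ≤ (g : ℝ) := by exact_mod_cast hg
    linarith
  rw [hcast, div_lt_iff₀ hl]
  have hexp : (2 * (g : ℝ) - 1) * a = Real.exp (Real.log (2 * (g : ℝ) - 1) + -(s * l)) := by
    rw [Real.exp_add, Real.exp_log hc]
  rw [hexp, Real.exp_lt_one_iff]
  constructor <;> intro <;> linarith
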